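/- Let X be a finite subset of R^k of even size and let M be a perfect matching on X minimizing the sum of squared edge lengths. Then every point x of R^k is contained in at most k+1 of the open balls B_e, where B_e is the open ball of radius |e|/2 centered at the midpoint of edge e, for e ranging over the edges of M. -/

import Mathlib

open scoped Classical RealInnerProductSpace
open Module

/-- `M` is a perfect matching on the finite set `X`: every edge of `M` joins two distinct
points of `X`, and every point of `X` belongs to exactly one edge of `M`. -/
def IsPerfectMatching {k : ℕ} (X : Finset (EuclideanSpace ℝ (Fin k)))
    (M : Finset (EuclideanSpace ℝ (Fin k) × EuclideanSpace ℝ (Fin k))) : Prop :=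
  (∀ e ∈ M, e.1 ∈ X ∧ e.2 ∈ X ∧ e.1 ≠ e.2) ∧
  ∀ x ∈ X, ∃! e, e ∈ M ∧ (x = e.1 ∨ x = e.2)


open scoped RealInnerProductSpace
open Module

lemma rankin : ∀ (k : ℕ) (E : Type) [NormedAddCommGroup E] [InnerProductSpace ℝ E]
    [FiniteDimensional ℝ E], finrank ℝ E ≤ k → ∀ (S : Finset E),
    (∀ u ∈ S, ∀ v ∈ S, u ≠ v → ⟪u, v⟫ < 0) → S.card ≤ k + 1 := by
  intro k
  induction k with
  | zero =>
    intro E _ _ _ hr S hS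
    have : Subsingleton E := by
      rw [← finrank_zero_iff (R := ℝ)]; omega
    calc S.card ≤ ({0} : Finset E).card := Finset.card_le_card (fun u _ => by
          simp [Subsingleton.elim u 0])
    _ = 1 := rfl
  | succ k ih =>
    intro E _ _ _ hr S hS
    classical
    by_cases hcard : S.card ≤ k + 2
    · exact hcard
    push_neg at hcard
    exfalso
    -- pick v₀ ∈ S
    obtain ⟨v₀, hv₀⟩ : ∃ v, v ∈ S := Finset.card_pos.mp (by omega)
    have hv0ne : v₀ ≠ 0 := by
      obtain ⟨u, hu, hune⟩ : ∃ u ∈ S, u ≠ v₀ := by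
        have : 1 < S.card := by omega
        obtain ⟨a, ha, b, hb, hab⟩ := Finset.one_lt_card.mp this
        rcases eq_or_ne a v₀ with rfl | h
        · exact ⟨b, hb, fun h => hab h.symm⟩
        · exact ⟨a, ha, h⟩
      intro h0
      have := hS u hu v₀ hv₀ hune
      rw [h0] at this
      simp at this
    have hnv : (0:ℝ) < ‖v₀‖^2 := by have := norm_pos_iff.mpr hv0ne; positivity
    set K := (ℝ ∙ v₀)ᗮ with hK
    have hmem : ∀ u : E, u - (⟪v₀, u⟫ / ‖v₀‖^2) • v₀ ∈ K := by
      intro u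
      rw [hK, Submodule.mem_orthogonal_singleton_iff_inner_right]
      rw [inner_sub_right, inner_smul_right, real_inner_self_eq_norm_sq]
      field_simp
      ring
    set g : E → K := fun u => ⟨u - (⟪v₀, u⟫ / ‖v₀‖^2) • v₀, hmem u⟩ with hg
    have hinner : ∀ u u' : E, ⟪(g u : E), (g u' : E)⟫
        = ⟪u, u'⟫ - ⟪v₀, u⟫ * ⟪v₀, u'⟫ / ‖v₀‖^2 := by
      intro u u'
      simp only [hg, inner_sub_left, inner_sub_right, inner_smul_left, inner_smul_right,
        real_inner_self_eq_norm_sq, RCLike.conj_to_real]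
      rw [real_inner_comm u v₀]
      field_simp
      ring
    have hneg : ∀ u ∈ S.erase v₀, ∀ u' ∈ S.erase v₀, u ≠ u' →
        ⟪(g u : E), (g u' : E)⟫ < 0 := by
      intro u hu u' hu' huu'
      rw [hinner]
      have h1 := hS u (Finset.mem_of_mem_erase hu) u' (Finset.mem_of_mem_erase hu') huu'
      have h2 := hS v₀ hv₀ u (Finset.mem_of_mem_erase hu) (Finset.ne_of_mem_erase hu).symm
      have h3 := hS v₀ hv₀ u' (Finset.mem_of_mem_erase hu') (Finset.ne_of_mem_erase hu').symm
      have : 0 < ⟪v₀, u⟫ * ⟪v₀, u'⟫ / ‖v₀‖^2 := div_pos (mul_pos_of_neg_of_neg h2 h3) hnv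
      linarith
    have hginj : Set.InjOn g (S.erase v₀) := by
      intro u hu u' hu' h
      by_contra hne
      have h1 := hneg u hu u' hu' hne
      rw [h] at h1
      have := real_inner_self_nonneg (x := (g u' : E))
      linarith
    have hrk : finrank ℝ K ≤ k := by
      rw [hK]
      have h1 : finrank ℝ (ℝ ∙ v₀) = 1 := finrank_span_singleton hv0ne
      have h2 := Submodule.finrank_add_finrank_orthogonal (K := (ℝ ∙ v₀)) (𝕜 := ℝ) (E := E)
      omega
    have := ih K hrk ((S.erase v₀).image g) ?_
    · have hc : ((S.erase v₀).image g).card = (S.erase v₀).card :=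
        Finset.card_image_of_injOn hginj
      have := Finset.card_erase_of_mem hv₀
      omega
    · intro w hw w' hw' hww'
      obtain ⟨u, hu, rfl⟩ := Finset.mem_image.mp hw
      obtain ⟨u', hu', rfl⟩ := Finset.mem_image.mp hw'
      have : u ≠ u' := fun h => hww' (by rw [h])
      exact hneg u hu u' hu' this

section
variable {k : ℕ}
local notation "E" => EuclideanSpace ℝ (Fin k)

lemma pm_unique {X : Finset E} {M : Finset (E × E)} (hM : IsPerfectMatching X M)
    {e f : E × E} {y : E} (he : e ∈ M) (hf : f ∈ M)
    (hye : y = e.1 ∨ y = e.2) (hyf : y = f.1 ∨ y = f.2) : e = f := by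
  have hyX : y ∈ X := by
    rcases hye with rfl | rfl
    · exact (hM.1 e he).1
    · exact (hM.1 e he).2.1
  obtain ⟨g, -, hg⟩ := hM.2 y hyX
  rw [hg e ⟨he, hye⟩, hg f ⟨hf, hyf⟩]

lemma insert_isPM (X : Finset E) (M₀ : Finset (E × E)) (a b c d : E)
    (haX : a ∈ X) (hbX : b ∈ X) (hcX : c ∈ X) (hdX : d ∈ X)
    (hab : a ≠ b) (hac : a ≠ c) (had : a ≠ d) (hbc : b ≠ c) (hbd : b ≠ d) (hcd : c ≠ d)
    (h1 : ∀ e ∈ M₀, e.1 ∈ X ∧ e.2 ∈ X ∧ e.1 ≠ e.2)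
    (h3 : ∀ e ∈ M₀, e.1 ≠ a ∧ e.1 ≠ b ∧ e.1 ≠ c ∧ e.1 ≠ d ∧
      e.2 ≠ a ∧ e.2 ≠ b ∧ e.2 ≠ c ∧ e.2 ≠ d)
    (h2 : ∀ y ∈ X, y ≠ a → y ≠ b → y ≠ c → y ≠ d →
      ∃! e, e ∈ M₀ ∧ (y = e.1 ∨ y = e.2)) :
    IsPerfectMatching X (insert (a, c) (insert (b, d) M₀)) := by
  constructor
  · intro e he
    rcases Finset.mem_insert.mp he with rfl | he
    · exact ⟨haX, hcX, hac⟩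
    rcases Finset.mem_insert.mp he with rfl | he
    · exact ⟨hbX, hdX, hbd⟩
    · exact h1 e he
  · intro y hy
    by_cases hya : y = a
    · refine ⟨(a, c), ⟨Finset.mem_insert_self _ _, Or.inl hya⟩, ?_⟩
      rintro e ⟨he, hye⟩
      rcases Finset.mem_insert.mp he with rfl | he
      · rfl
      rcases Finset.mem_insert.mp he with rfl | he
      · exfalso
        rcases hye with h | h
        · exact hab (hya.symm.trans h)
        · exact had (hya.symm.trans h)
      · exfalso
        have h3e := h3 e he
        rcases hye with h | h
        · exact h3e.1 (h.symm.trans hya)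
        · exact h3e.2.2.2.2.1 (h.symm.trans hya)
    by_cases hyc : y = c
    · refine ⟨(a, c), ⟨Finset.mem_insert_self _ _, Or.inr hyc⟩, ?_⟩
      rintro e ⟨he, hye⟩
      rcases Finset.mem_insert.mp he with rfl | he
      · rfl
      rcases Finset.mem_insert.mp he with rfl | he
      · exfalso
        rcases hye with h | h
        · exact hbc ((hyc.symm.trans h).symm)
        · exact hcd (hyc.symm.trans h)
      · exfalso
        have h3e := h3 e he
        rcases hye with h | h
        · exact h3e.2.2.1 (h.symm.trans hyc)
        · exact h3e.2.2.2.2.2.2.1 (h.symm.trans hyc)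
    by_cases hyb : y = b
    · refine ⟨(b, d), ⟨Finset.mem_insert_of_mem (Finset.mem_insert_self _ _),
        Or.inl hyb⟩, ?_⟩
      rintro e ⟨he, hye⟩
      rcases Finset.mem_insert.mp he with rfl | he
      · exfalso
        rcases hye with h | h
        · exact hya h
        · exact hyc h
      rcases Finset.mem_insert.mp he with rfl | he
      · rfl
      · exfalso
        have h3e := h3 e he
        rcases hye with h | h
        · exact h3e.2.1 (h.symm.trans hyb)
        · exact h3e.2.2.2.2.2.1 (h.symm.trans hyb)
    by_cases hyd : y = d
    · refine ⟨(b, d), ⟨Finset.mem_insert_of_mem (Finset.mem_insert_self _ _),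
        Or.inr hyd⟩, ?_⟩
      rintro e ⟨he, hye⟩
      rcases Finset.mem_insert.mp he with rfl | he
      · exfalso
        rcases hye with h | h
        · exact hya h
        · exact hyc h
      rcases Finset.mem_insert.mp he with rfl | he
      · rfl
      · exfalso
        have h3e := h3 e he
        rcases hye with h | h
        · exact h3e.2.2.2.1 (h.symm.trans hyd)
        · exact h3e.2.2.2.2.2.2.2 (h.symm.trans hyd)
    · obtain ⟨g, ⟨hg, hyg⟩, hgu⟩ := h2 y hy hya hyb hyc hyd
      refine ⟨g, ⟨Finset.mem_insert_of_mem (Finset.mem_insert_of_mem hg), hyg⟩, ?_⟩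
      rintro e ⟨he, hye⟩
      rcases Finset.mem_insert.mp he with rfl | he
      · exfalso
        rcases hye with h | h
        · exact hya h
        · exact hyc h
      rcases Finset.mem_insert.mp he with rfl | he
      · exfalso
        rcases hye with h | h
        · exact hyb h
        · exact hyd h
      · exact hgu e ⟨he, hye⟩

lemma swap_ineq {X : Finset E} {M : Finset (E × E)} (hM : IsPerfectMatching X M)
    (hmin : ∀ M', IsPerfectMatching X M' →
      ∑ e ∈ M, ‖e.1 - e.2‖ ^ 2 ≤ ∑ e ∈ M', ‖e.1 - e.2‖ ^ 2)
    {a b c d : E} (habM : (a, b) ∈ M) (hcdM : (c, d) ∈ M) (hne : (a, b) ≠ (c, d)) :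
    ‖a - b‖ ^ 2 + ‖c - d‖ ^ 2 ≤ ‖a - c‖ ^ 2 + ‖b - d‖ ^ 2 ∧
    ‖a - b‖ ^ 2 + ‖c - d‖ ^ 2 ≤ ‖a - d‖ ^ 2 + ‖b - c‖ ^ 2 := by
  have hab : a ≠ b := (hM.1 _ habM).2.2
  have hcd : c ≠ d := (hM.1 _ hcdM).2.2
  have hac : a ≠ c := fun h => hne (pm_unique hM habM hcdM (Or.inl rfl) (Or.inl h))
  have had : a ≠ d := fun h => hne (pm_unique hM habM hcdM (Or.inl rfl) (Or.inr h))
  have hbc : b ≠ c := fun h => hne (pm_unique hM habM hcdM (Or.inr rfl) (Or.inl h))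
  have hbd : b ≠ d := fun h => hne (pm_unique hM habM hcdM (Or.inr rfl) (Or.inr h))
  set M₀ := (M.erase (a, b)).erase (c, d) with hM₀
  have hM₀sub : M₀ ⊆ M := fun e he =>
    Finset.mem_of_mem_erase (Finset.mem_of_mem_erase he)
  have h1 : ∀ e ∈ M₀, e.1 ∈ X ∧ e.2 ∈ X ∧ e.1 ≠ e.2 := fun e he => hM.1 e (hM₀sub he)
  have h3 : ∀ e ∈ M₀, e.1 ≠ a ∧ e.1 ≠ b ∧ e.1 ≠ c ∧ e.1 ≠ d ∧
      e.2 ≠ a ∧ e.2 ≠ b ∧ e.2 ≠ c ∧ e.2 ≠ d := by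
    intro e he
    have heM : e ∈ M := hM₀sub he
    have he1 : e ≠ (c, d) := Finset.ne_of_mem_erase he
    have he2 : e ≠ (a, b) := Finset.ne_of_mem_erase (Finset.mem_of_mem_erase he)
    refine ⟨?_, ?_, ?_, ?_, ?_, ?_, ?_, ?_⟩ <;> intro h
    · exact he2 (pm_unique hM heM habM (Or.inl rfl) (Or.inl h))
    · exact he2 (pm_unique hM heM habM (Or.inl rfl) (Or.inr h))
    · exact he1 (pm_unique hM heM hcdM (Or.inl rfl) (Or.inl h))
    · exact he1 (pm_unique hM heM hcdM (Or.inl rfl) (Or.inr h))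
    · exact he2 (pm_unique hM heM habM (Or.inr rfl) (Or.inl h))
    · exact he2 (pm_unique hM heM habM (Or.inr rfl) (Or.inr h))
    · exact he1 (pm_unique hM heM hcdM (Or.inr rfl) (Or.inl h))
    · exact he1 (pm_unique hM heM hcdM (Or.inr rfl) (Or.inr h))
  have h2 : ∀ y ∈ X, y ≠ a → y ≠ b → y ≠ c → y ≠ d →
      ∃! e, e ∈ M₀ ∧ (y = e.1 ∨ y = e.2) := by
    intro y hy hya hyb hyc hyd
    obtain ⟨g, ⟨hg, hyg⟩, hgu⟩ := hM.2 y hy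
    have hg1 : g ≠ (a, b) := by
      rintro rfl; rcases hyg with h | h; exacts [hya h, hyb h]
    have hg2 : g ≠ (c, d) := by
      rintro rfl; rcases hyg with h | h; exacts [hyc h, hyd h]
    refine ⟨g, ⟨Finset.mem_erase.mpr ⟨hg2, Finset.mem_erase.mpr ⟨hg1, hg⟩⟩, hyg⟩, ?_⟩
    rintro e ⟨he, hye⟩
    exact hgu e ⟨hM₀sub he, hye⟩
  obtain ⟨haX, hbX, -⟩ := hM.1 _ habM
  obtain ⟨hcX, hdX, -⟩ := hM.1 _ hcdM
  have hsumM : ∑ e ∈ M, ‖e.1 - e.2‖ ^ 2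
      = ‖a - b‖ ^ 2 + ‖c - d‖ ^ 2 + ∑ e ∈ M₀, ‖e.1 - e.2‖ ^ 2 := by
    rw [hM₀]
    rw [← Finset.sum_erase_add M _ habM,
      ← Finset.sum_erase_add (M.erase (a, b)) _
        (Finset.mem_erase.mpr ⟨hne.symm, hcdM⟩)]
    ring
  have key : ∀ c' d' : E, c' ≠ d' → a ≠ c' → a ≠ d' → b ≠ c' → b ≠ d' →
      c' ∈ X → d' ∈ X →
      (∀ e ∈ M₀, e.1 ≠ a ∧ e.1 ≠ b ∧ e.1 ≠ c' ∧ e.1 ≠ d' ∧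
        e.2 ≠ a ∧ e.2 ≠ b ∧ e.2 ≠ c' ∧ e.2 ≠ d') →
      (∀ y ∈ X, y ≠ a → y ≠ b → y ≠ c' → y ≠ d' →
        ∃! e, e ∈ M₀ ∧ (y = e.1 ∨ y = e.2)) →
      ‖a - b‖ ^ 2 + ‖c - d‖ ^ 2 ≤ ‖a - c'‖ ^ 2 + ‖b - d'‖ ^ 2 := by
    intro c' d' hcd' hac' had' hbc' hbd' hcX' hdX' h3' h2'
    have hPM := insert_isPM X M₀ a b c' d' haX hbX hcX' hdX'
      hab hac' had' hbc' hbd' hcd' h1 h3' h2'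
    have := hmin _ hPM
    have hnm1 : (a, c') ∉ insert (b, d') M₀ := by
      simp only [Finset.mem_insert]
      rintro (h | h)
      · exact hab (congrArg Prod.fst h)
      · exact (h3' _ h).1 rfl
    have hnm2 : (b, d') ∉ M₀ := fun h => (h3' _ h).2.1 rfl
    rw [Finset.sum_insert hnm1, Finset.sum_insert hnm2, hsumM] at this
    simp only at this
    linarith
  constructor
  · exact key c d hcd hac had hbc hbd hcX hdX h3 h2
  · refine key d c (Ne.symm hcd) had hac hbd hbc hdX hcX ?_ ?_
    · intro e he; have := h3 e he; tauto
    · intro y hy hya hyb hyd' hyc'; exact h2 y hy hya hyb hyc' hyd'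

end

lemma ball_inner_neg {k : ℕ} {a b x : EuclideanSpace ℝ (Fin k)}
    (h : ‖x - midpoint ℝ a b‖ < ‖a - b‖ / 2) : ⟪a - x, b - x⟫ < 0 := by
  have hsq : ‖x - midpoint ℝ a b‖ ^ 2 < (‖a - b‖ / 2) ^ 2 :=
    pow_lt_pow_left₀ h (norm_nonneg _) (by norm_num)
  have h1 : x - midpoint ℝ a b = (-(2⁻¹ : ℝ)) • ((a - x) + (b - x)) := by
    rw [midpoint_eq_smul_add, invOf_eq_inv]
    module
  have h2 : a - b = (a - x) - (b - x) := by abel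
  rw [h1, h2, norm_smul] at hsq
  have h3 := norm_add_sq_real (a - x) (b - x)
  have h4 := norm_sub_sq_real (a - x) (b - x)
  have h5 : ‖(-(2⁻¹) : ℝ)‖ = 2⁻¹ := by norm_num
  rw [h5] at hsq
  nlinarith [norm_nonneg ((a - x) + (b - x)), norm_nonneg ((a - x) - (b - x))]

theorem matching_balls_kplus1_fold (k : ℕ) (X : Finset (EuclideanSpace ℝ (Fin k)))
    (heven : Even X.card)
    (M : Finset (EuclideanSpace ℝ (Fin k) × EuclideanSpace ℝ (Fin k)))
    (hM : IsPerfectMatching X M)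
    (hmin : ∀ M', IsPerfectMatching X M' →
      ∑ e ∈ M, ‖e.1 - e.2‖ ^ 2 ≤ ∑ e ∈ M', ‖e.1 - e.2‖ ^ 2)
    (x : EuclideanSpace ℝ (Fin k)) :
    (M.filter fun e => ‖x - midpoint ℝ e.1 e.2‖ < ‖e.1 - e.2‖ / 2).card ≤ k + 1 := by
  classical
  set S := M.filter fun e => ‖x - midpoint ℝ e.1 e.2‖ < ‖e.1 - e.2‖ / 2 with hS
  set v : EuclideanSpace ℝ (Fin k) × EuclideanSpace ℝ (Fin k) → EuclideanSpace ℝ (Fin k) :=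
    fun e => (e.1 - x) + (e.2 - x) with hv
  have hSsub : S ⊆ M := Finset.filter_subset _ _
  have hball : ∀ e ∈ S, ⟪e.1 - x, e.2 - x⟫ < 0 := fun e he =>
    ball_inner_neg (Finset.mem_filter.mp he).2
  have hpair : ∀ e ∈ S, ∀ f ∈ S, e ≠ f → ⟪v e, v f⟫ < 0 := by
    intro e he f hf hef
    have heM : (e.1, e.2) ∈ M := hSsub he
    have hfM : (f.1, f.2) ∈ M := hSsub hf
    have hne : (e.1, e.2) ≠ (f.1, f.2) := by
      intro h
      exact hef (Prod.ext (congrArg Prod.fst h) (congrArg Prod.snd h))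
    obtain ⟨hs1, hs2⟩ := swap_ineq hM hmin heM hfM hne
    have hAB := hball e he
    have hCD := hball f hf
    have r1 : e.1 - e.2 = (e.1 - x) - (e.2 - x) := by abel
    have r2 : f.1 - f.2 = (f.1 - x) - (f.2 - x) := by abel
    have r3 : e.1 - f.1 = (e.1 - x) - (f.1 - x) := by abel
    have r4 : e.2 - f.2 = (e.2 - x) - (f.2 - x) := by abel
    have r5 : e.1 - f.2 = (e.1 - x) - (f.2 - x) := by abel
    have r6 : e.2 - f.1 = (e.2 - x) - (f.1 - x) := by abel
    rw [r1, r2, r3, r4] at hs1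
    rw [r1, r2, r5, r6] at hs2
    have n1 := norm_sub_sq_real (e.1 - x) (e.2 - x)
    have n2 := norm_sub_sq_real (f.1 - x) (f.2 - x)
    have n3 := norm_sub_sq_real (e.1 - x) (f.1 - x)
    have n4 := norm_sub_sq_real (e.2 - x) (f.2 - x)
    have n5 := norm_sub_sq_real (e.1 - x) (f.2 - x)
    have n6 := norm_sub_sq_real (e.2 - x) (f.1 - x)
    have hvv : ⟪v e, v f⟫ = ⟪e.1 - x, f.1 - x⟫ + ⟪e.1 - x, f.2 - x⟫
        + ⟪e.2 - x, f.1 - x⟫ + ⟪e.2 - x, f.2 - x⟫ := by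
      simp only [hv, inner_add_left, inner_add_right]
      ring
    rw [hvv]
    linarith
  have hinj : Set.InjOn v S := by
    intro e he f hf hvef
    by_contra hne
    have h1 := hpair e he f hf hne
    rw [hvef] at h1
    exact absurd h1 (not_lt.mpr (real_inner_self_nonneg))
  have hrk : finrank ℝ (EuclideanSpace ℝ (Fin k)) ≤ k :=
    le_of_eq finrank_euclideanSpace_fin
  have := rankin k (EuclideanSpace ℝ (Fin k)) hrk (S.image v) ?_
  · rwa [Finset.card_image_of_injOn hinj] at this
  · intro u hu w hw huw
    obtain ⟨e, he, rfl⟩ := Finset.mem_image.mp hu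
    obtain ⟨f, hf, rfl⟩ := Finset.mem_image.mp hw
    exact hpair e he f hf (fun h => huw (by rw [h]))
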